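/- Let X and Y be jointly Gaussian real random variables with mean zero, unit variances, and correlation ρ ∈ [-1,1]. Then E[sign(X)·sign(Y)] = (2/π)·arcsin(ρ). -/

import Mathlib

open MeasureTheory ProbabilityTheory Real Set
open scoped ENNReal NNReal

noncomputable def gk : ℝ := (Real.sqrt (2 * Real.pi))⁻¹
noncomputable def gp (x : ℝ) : ℝ := gk * Real.exp (-(1/2) * x ^ 2)
noncomputable def Phi (t : ℝ) : ℝ := ∫ y in Set.Iic t, gp y

lemma gk_pos : 0 < gk := by
  have : 0 < Real.sqrt (2 * Real.pi) := Real.sqrt_pos.2 (by positivity)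
  exact inv_pos.2 this

lemma gk_sq : gk ^ 2 = (2 * Real.pi)⁻¹ := by
  rw [gk, inv_pow, Real.sq_sqrt (by positivity)]

lemma gp_pos (x : ℝ) : 0 < gp x := mul_pos gk_pos (Real.exp_pos _)

lemma gp_nonneg (x : ℝ) : 0 ≤ gp x := (gp_pos x).le

lemma gp_le_gk (x : ℝ) : gp x ≤ gk := by
  have : Real.exp (-(1/2) * x ^ 2) ≤ 1 := Real.exp_le_one_iff.2 (by nlinarith [sq_nonneg x])
  calc gp x ≤ gk * 1 := mul_le_mul_of_nonneg_left this gk_pos.le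
  _ = gk := mul_one _

lemma gp_cont : Continuous gp :=
  continuous_const.mul ((continuous_const.mul (continuous_pow 2)).rexp)

lemma gp_eq_pdf (x : ℝ) : gp x = gaussianPDFReal 0 1 x := by
  rw [gp, gk, gaussianPDFReal]
  push_cast
  rw [mul_one, sub_zero]
  congr 1
  ring_nf

lemma gp_integrable : Integrable gp :=
  ((integrable_exp_neg_mul_sq (by norm_num : (0:ℝ) < 1/2)).const_mul gk)

lemma gp_integral : ∫ x, gp x = 1 := by
  simp_rw [gp_eq_pdf]
  exact integral_gaussianPDFReal_eq_one 0 one_ne_zero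

lemma gp_even (x : ℝ) : gp (-x) = gp x := by simp [gp]

lemma Phi_eq (t : ℝ) : Phi t = Phi 0 + ∫ y in (0:ℝ)..t, gp y := by
  have := intervalIntegral.integral_Iic_sub_Iic (f := gp) (μ := volume) (a := (0:ℝ)) (b := t)
    gp_integrable.integrableOn gp_integrable.integrableOn
  rw [Phi, Phi]
  linarith

lemma hasDerivAt_Phi (t : ℝ) : HasDerivAt Phi (gp t) t := by
  have h : HasDerivAt (fun u => Phi 0 + ∫ y in (0:ℝ)..u, gp y) (gp t) t := by
    refine HasDerivAt.const_add _ ?_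
    exact intervalIntegral.integral_hasDerivAt_right
      gp_integrable.intervalIntegrable
      (gp_cont.stronglyMeasurableAtFilter _ _)
      gp_cont.continuousAt
  have : (fun u => Phi 0 + ∫ y in (0:ℝ)..u, gp y) = Phi := by
    funext u; rw [← Phi_eq]
  rwa [this] at h

lemma Phi_cont : Continuous Phi :=
  continuous_iff_continuousAt.2 fun t => (hasDerivAt_Phi t).continuousAt

lemma Phi_neg (t : ℝ) : Phi (-t) = 1 - Phi t := by
  have h1 : Phi (-t) = ∫ y in Set.Ioi t, gp y := by
    rw [Phi]
    have := integral_comp_neg_Iic (-t) gp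
    simp only [neg_neg] at this
    rw [← this]
    exact setIntegral_congr_fun measurableSet_Iic fun y _ => (gp_even y).symm
  have h2 : Phi t + ∫ y in Set.Ioi t, gp y = 1 := by
    rw [Phi, intervalIntegral.integral_Iic_add_Ioi gp_integrable.integrableOn gp_integrable.integrableOn,
      gp_integral]
  linarith [h1, h2]

lemma Phi_zero : Phi 0 = 1/2 := by
  have := Phi_neg 0
  rw [neg_zero] at this
  linarith

lemma Phi_nonneg (t : ℝ) : 0 ≤ Phi t :=
  setIntegral_nonneg measurableSet_Iic fun x _ => gp_nonneg x

lemma Phi_le_one (t : ℝ) : Phi t ≤ 1 := by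
  have h2 : Phi t + ∫ y in Set.Ioi t, gp y = 1 := by
    rw [Phi, intervalIntegral.integral_Iic_add_Ioi gp_integrable.integrableOn gp_integrable.integrableOn,
      gp_integral]
  have : 0 ≤ ∫ y in Set.Ioi t, gp y :=
    setIntegral_nonneg measurableSet_Ioi fun x _ => gp_nonneg x
  linarith

lemma measurable_rsign : Measurable Real.sign := by
  have : Real.sign = fun r : ℝ => if r < 0 then (-1:ℝ) else if 0 < r then 1 else 0 := by
    funext r; rfl
  rw [this]
  exact Measurable.ite (measurableSet_lt measurable_id measurable_const) measurable_const
    (Measurable.ite (measurableSet_lt measurable_const measurable_id) measurable_const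
      measurable_const)

lemma abs_rsign_le (x : ℝ) : |Real.sign x| ≤ 1 := by
  rcases Real.sign_apply_eq x with h | h | h <;> rw [h] <;> norm_num

lemma gaussianReal_eq_withDensity :
    gaussianReal 0 1 = volume.withDensity (fun x => ENNReal.ofReal (gp x)) := by
  rw [gaussianReal_of_var_ne_zero 0 one_ne_zero]
  congr 1
  funext x
  rw [gaussianPDF_def, gp_eq_pdf]

lemma integral_gaussian_eq (g : ℝ → ℝ) :
    ∫ x, g x ∂(gaussianReal 0 1) = ∫ x, gp x * g x := by
  rw [gaussianReal_eq_withDensity]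
  have hm : Measurable (fun x => (gp x).toNNReal) :=
    (measurable_real_toNNReal.comp gp_cont.measurable)
  have : (fun x : ℝ => ENNReal.ofReal (gp x)) = fun x => ((gp x).toNNReal : ℝ≥0∞) := rfl
  rw [this, integral_withDensity_eq_integral_smul hm]
  congr 1
  funext x
  rw [NNReal.smul_def, smul_eq_mul, Real.coe_toNNReal _ (gp_nonneg x)]

lemma integral_x_exp {b : ℝ} (hb : 0 < b) :
    ∫ x in Set.Ioi (0:ℝ), x * Real.exp (-b * x ^ 2) = (2 * b)⁻¹ := by
  have A : ∀ x : ℝ, HasDerivAt (fun y : ℝ => -(2 * b)⁻¹ * Real.exp (-b * y ^ 2))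
      (x * Real.exp (-b * x ^ 2)) x := by
    intro x
    refine (((hasDerivAt_pow 2 x).const_mul (-b)).exp.const_mul (-(2 * b)⁻¹)).congr_deriv ?_
    field_simp
    ring
  have B : Filter.Tendsto (fun y : ℝ => -(2 * b)⁻¹ * Real.exp (-b * y ^ 2))
      Filter.atTop (nhds (-(2 * b)⁻¹ * 0)) := by
    refine Filter.Tendsto.const_mul _ ?_
    refine Real.tendsto_exp_atBot.comp ?_
    exact (Filter.tendsto_pow_atTop two_ne_zero).const_mul_atTop_of_neg (neg_lt_zero.2 hb)
  have := integral_Ioi_of_hasDerivAt_of_tendsto' (a := (0:ℝ)) (fun x _ => A x)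
    (integrable_mul_exp_neg_mul_sq hb).integrableOn B
  rw [this]
  norm_num

lemma abs_two_Phi_sub_one_le (t : ℝ) : |2 * Phi t - 1| ≤ 1 :=
  abs_le.2 ⟨by linarith [Phi_nonneg t], by linarith [Phi_le_one t]⟩

lemma rsign_mul_self (x : ℝ) : Real.sign x * x = |x| := by
  rcases lt_trichotomy x 0 with h | h | h
  · rw [Real.sign_of_neg h, abs_of_neg h]; ring
  · simp [h]
  · rw [Real.sign_of_pos h, abs_of_pos h]; ring

lemma sign_inner {s : ℝ} (hs : 0 < s) (a : ℝ) :
    ∫ y, Real.sign (a + s * y) ∂(gaussianReal 0 1) = 2 * Phi (a / s) - 1 := by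
  rw [integral_gaussian_eq]
  set t0 := -(a / s) with ht0
  have hmeas : Measurable fun y : ℝ => gp y * Real.sign (a + s * y) :=
    gp_cont.measurable.mul (measurable_rsign.comp
      (measurable_const.add (measurable_id.const_mul s)))
  have hint : Integrable fun y : ℝ => gp y * Real.sign (a + s * y) := by
    refine gp_integrable.mono' hmeas.aestronglyMeasurable ?_
    filter_upwards with y
    rw [Real.norm_eq_abs, abs_mul, abs_of_nonneg (gp_nonneg y)]
    calc gp y * |Real.sign (a + s * y)| ≤ gp y * 1 :=
          mul_le_mul_of_nonneg_left (abs_rsign_le _) (gp_nonneg y)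
      _ = gp y := mul_one _
  have hsplit := intervalIntegral.integral_Iic_add_Ioi (b := t0)
    hint.integrableOn hint.integrableOn
  have hIoi : ∫ y in Set.Ioi t0, gp y * Real.sign (a + s * y) = 1 - Phi t0 := by
    have h1 : ∫ y in Set.Ioi t0, gp y * Real.sign (a + s * y) = ∫ y in Set.Ioi t0, gp y := by
      refine setIntegral_congr_fun measurableSet_Ioi fun y hy => ?_
      have : 0 < a + s * y := by
        have h0 : t0 < y := hy
        rw [ht0] at h0
        have h1 : -(a/s) * s < y * s := mul_lt_mul_of_pos_right h0 hs
        have h2 : -(a/s) * s = -a := by field_simp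
        have h3 : y * s = s * y := mul_comm _ _
        linarith
      rw [Real.sign_of_pos this, mul_one]
    have h2 := intervalIntegral.integral_Iic_add_Ioi (b := t0)
      gp_integrable.integrableOn gp_integrable.integrableOn
    rw [gp_integral] at h2
    rw [h1]
    have hdef : Phi t0 = ∫ y in Set.Iic t0, gp y := rfl
    linarith
  have hIic : ∫ y in Set.Iic t0, gp y * Real.sign (a + s * y) = -Phi t0 := by
    rw [integral_Iic_eq_integral_Iio]
    have h1 : ∫ y in Set.Iio t0, gp y * Real.sign (a + s * y) = ∫ y in Set.Iio t0, -gp y := by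
      refine setIntegral_congr_fun measurableSet_Iio fun y hy => ?_
      have hlt : y < t0 := hy
      have : a + s * y < 0 := by
        rw [ht0] at hlt
        have h1 : y * s < -(a/s) * s := mul_lt_mul_of_pos_right hlt hs
        have h2 : -(a/s) * s = -a := by field_simp
        have h3 : y * s = s * y := mul_comm _ _
        linarith
      rw [Real.sign_of_neg this]
      ring
    rw [h1, integral_neg, ← integral_Iic_eq_integral_Iio]
    rfl
  have hPhit0 : Phi t0 = 1 - Phi (a / s) := by
    rw [ht0, Phi_neg]
  rw [← hsplit, hIic, hIoi, hPhit0]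
  ring

noncomputable def Gf (c : ℝ) : ℝ := ∫ x, gp x * (Real.sign x * (2 * Phi (c * x) - 1))

lemma Gf_meas (c : ℝ) :
    AEStronglyMeasurable (fun x => gp x * (Real.sign x * (2 * Phi (c * x) - 1))) volume := by
  refine Measurable.aestronglyMeasurable ?_
  exact gp_cont.measurable.mul (measurable_rsign.mul
    (((Phi_cont.comp (continuous_const.mul continuous_id)).measurable.const_mul 2).sub
      measurable_const))

lemma Gf_int (c : ℝ) :
    Integrable (fun x => gp x * (Real.sign x * (2 * Phi (c * x) - 1))) := by
  refine gp_integrable.mono' (Gf_meas c) ?_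
  filter_upwards with x
  rw [Real.norm_eq_abs, abs_mul, abs_mul, abs_of_nonneg (gp_nonneg x)]
  have h1 : |Real.sign x| * |2 * Phi (c * x) - 1| ≤ 1 * 1 :=
    mul_le_mul (abs_rsign_le x) (abs_two_Phi_sub_one_le _) (abs_nonneg _) zero_le_one
  calc gp x * (|Real.sign x| * |2 * Phi (c * x) - 1|) ≤ gp x * (1 * 1) :=
        mul_le_mul_of_nonneg_left h1 (gp_nonneg x)
    _ = gp x := by ring

lemma integral_deriv_integrand (c : ℝ) :
    ∫ x, gp x * (Real.sign x * (2 * (gp (c * x) * x))) = (2 / Real.pi) * (1 + c ^ 2)⁻¹ := by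
  have hb : 0 < (1 + c ^ 2) / 2 := by positivity
  have key : ∀ x : ℝ, gp x * (Real.sign x * (2 * (gp (c * x) * x)))
      = (2 * gk ^ 2) * (|x| * Real.exp (-((1 + c ^ 2) / 2) * x ^ 2)) := by
    intro x
    have hsx : Real.sign x * x = |x| := rsign_mul_self x
    rw [gp, gp]
    have hexp : Real.exp (-(1/2) * x ^ 2) * Real.exp (-(1/2) * (c * x) ^ 2)
        = Real.exp (-((1 + c ^ 2) / 2) * x ^ 2) := by
      rw [← Real.exp_add]; congr 1; ring
    calc gk * Real.exp (-(1/2) * x ^ 2) * (Real.sign x * (2 * (gk * Real.exp (-(1/2) * (c*x) ^ 2) * x)))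
        = (2 * gk ^ 2) * ((Real.sign x * x) * (Real.exp (-(1/2) * x ^ 2) * Real.exp (-(1/2) * (c*x) ^ 2))) := by ring
      _ = (2 * gk ^ 2) * (|x| * Real.exp (-((1 + c ^ 2) / 2) * x ^ 2)) := by rw [hsx, hexp]
  simp_rw [key]
  rw [integral_const_mul]
  have habs : ∫ x : ℝ, |x| * Real.exp (-((1 + c ^ 2) / 2) * x ^ 2)
      = 2 * ∫ x in Set.Ioi (0:ℝ), x * Real.exp (-((1 + c ^ 2) / 2) * x ^ 2) := by
    rw [← integral_comp_abs (f := fun t : ℝ => t * Real.exp (-((1 + c ^ 2) / 2) * t ^ 2))]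
    congr 1 with x
    simp [sq_abs]
  rw [habs, integral_x_exp hb, gk_sq]
  have hπ : Real.pi ≠ 0 := Real.pi_ne_zero
  have h1c : (1 + c ^ 2) ≠ 0 := by positivity
  field_simp

lemma hasDerivAt_Gf (c : ℝ) : HasDerivAt Gf ((2 / Real.pi) * (1 + c ^ 2)⁻¹) c := by
  have hbound_int : Integrable (fun x : ℝ => 2 * gk ^ 2 * (|x| * Real.exp (-(1/2) * x ^ 2))) := by
    have h0 : Integrable (fun x : ℝ => |x * Real.exp (-(1/2) * x ^ 2)|) :=
      (integrable_mul_exp_neg_mul_sq (by norm_num : (0:ℝ) < 1/2)).abs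
    have h1 : (fun x : ℝ => |x * Real.exp (-(1/2) * x ^ 2)|)
        = fun x : ℝ => |x| * Real.exp (-(1/2) * x ^ 2) := by
      funext x; rw [abs_mul, abs_of_pos (Real.exp_pos _)]
    rw [h1] at h0
    exact h0.const_mul _
  have hres := hasDerivAt_integral_of_dominated_loc_of_deriv_le
    (F := fun c x => gp x * (Real.sign x * (2 * Phi (c * x) - 1)))
    (F' := fun c x => gp x * (Real.sign x * (2 * (gp (c * x) * x))))
    (x₀ := c) (s := Metric.ball c 1) (bound := fun x : ℝ => 2 * gk ^ 2 * (|x| * Real.exp (-(1/2) * x ^ 2)))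
    (Metric.ball_mem_nhds c one_pos)
    (Filter.Eventually.of_forall fun c' => Gf_meas c')
    (Gf_int c)
    (by
      refine Measurable.aestronglyMeasurable ?_
      exact gp_cont.measurable.mul (measurable_rsign.mul
        (((gp_cont.comp (continuous_const.mul continuous_id)).measurable.mul measurable_id).const_mul 2)))
    (by
      filter_upwards with x c' _
      rw [Real.norm_eq_abs, abs_mul, abs_mul, abs_mul, abs_mul,
        abs_of_nonneg (gp_nonneg x), abs_of_nonneg (gp_nonneg (c' * x)),
        abs_of_nonneg (by norm_num : (0:ℝ) ≤ 2)]
      have h1 : gp x * (|Real.sign x| * (2 * (gp (c' * x) * |x|)))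
          ≤ gp x * (1 * (2 * (gk * |x|))) := by
        gcongr <;> first | exact gp_nonneg _ | exact abs_rsign_le x | exact gp_le_gk _ | exact mul_nonneg (by norm_num) (mul_nonneg (gp_nonneg _) (abs_nonneg _))
      calc gp x * (|Real.sign x| * (2 * (gp (c' * x) * |x|))) ≤ gp x * (1 * (2 * (gk * |x|))) := h1
        _ = 2 * gk ^ 2 * (|x| * Real.exp (-(1/2) * x ^ 2)) := by rw [gp]; ring)
    hbound_int
    (by
      filter_upwards with x c' _
      have hPhi : HasDerivAt (fun u : ℝ => Phi (u * x)) (gp (c' * x) * x) c' :=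
        by have := (hasDerivAt_Phi (c' * x)).comp c' (hasDerivAt_mul_const (x := c') x); exact this
      have := (((hPhi.const_mul (2:ℝ)).sub_const 1).const_mul (Real.sign x)).const_mul (gp x)
      convert this using 1)
  have := hres.2
  rwa [integral_deriv_integrand c] at this

lemma Gf_eq (c : ℝ) : Gf c = (2 / Real.pi) * Real.arctan c := by
  have h : ∀ t : ℝ, HasDerivAt (fun u => Gf u - (2 / Real.pi) * Real.arctan u) 0 t := by
    intro t
    have h1 := hasDerivAt_Gf t
    have h2 := (Real.hasDerivAt_arctan t).const_mul (2 / Real.pi)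
    have h3 := h1.sub h2
    refine h3.congr_deriv ?_
    rw [one_div]
    ring
  have hconst := is_const_of_deriv_eq_zero (𝕜 := ℝ)
    (f := fun u => Gf u - (2 / Real.pi) * Real.arctan u)
    (fun t => (h t).differentiableAt) (fun t => (h t).deriv) c 0
  have hG0 : Gf 0 = 0 := by
    rw [Gf]
    have hz : ∀ x : ℝ, gp x * (Real.sign x * (2 * Phi ((0:ℝ) * x) - 1)) = 0 := by
      intro x; rw [zero_mul, Phi_zero]; ring
    simp_rw [hz, integral_zero]
  rw [hG0, Real.arctan_zero] at hconst
  simp at hconst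
  linarith

lemma sign_integrand_meas (ρ s : ℝ) :
    Measurable (fun p : ℝ × ℝ => Real.sign p.1 * Real.sign (ρ * p.1 + s * p.2)) :=
  (measurable_rsign.comp measurable_fst).mul (measurable_rsign.comp
    ((measurable_fst.const_mul ρ).add (measurable_snd.const_mul s)))

lemma gauss_singleton_zero : (gaussianReal 0 1 : Measure ℝ) {0} = 0 :=
  (gaussianReal_absolutelyContinuous 0 one_ne_zero) Real.volume_singleton

lemma prod_fst_zero_null :
    ((gaussianReal 0 1).prod (gaussianReal 0 1)) {p : ℝ × ℝ | p.1 = 0} = 0 := by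
  have hset : {p : ℝ × ℝ | p.1 = 0} = ({0} : Set ℝ) ×ˢ (Set.univ : Set ℝ) := by
    ext ⟨a, b⟩; simp [eq_comm]
  rw [hset, Measure.prod_prod, gauss_singleton_zero, zero_mul]

/-- Let `X` and `Y` be jointly Gaussian real random variables with mean zero, unit
variances, and correlation `ρ ∈ [-1,1]` (realized via two independent standard
Gaussians `Z₁, Z₂` as `X = Z₁`, `Y = ρ Z₁ + √(1-ρ²) Z₂`).  Then
`E[sign X · sign Y] = (2/π) arcsin ρ`. -/
theorem signSGD_sign_gaussian_identity
    {Ω : Type*} [MeasurableSpace Ω] (μ : Measure Ω) [IsProbabilityMeasure μ]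
    (ρ : ℝ) (hρ : ρ ∈ Set.Icc (-1 : ℝ) 1)
    (Z₁ Z₂ : Ω → ℝ)
    (h₁ : Measure.map Z₁ μ = gaussianReal 0 1)
    (h₂ : Measure.map Z₂ μ = gaussianReal 0 1)
    (hind : IndepFun Z₁ Z₂ μ)
    (X Y : Ω → ℝ)
    (hX : X = Z₁)
    (hY : Y = fun ω => ρ * Z₁ ω + Real.sqrt (1 - ρ ^ 2) * Z₂ ω) :
    ∫ ω, Real.sign (X ω) * Real.sign (Y ω) ∂μ = (2 / Real.pi) * Real.arcsin ρ := by
  have hZ₁ : AEMeasurable Z₁ μ := by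
    by_contra h
    rw [Measure.map_of_not_aemeasurable h] at h₁
    exact (IsProbabilityMeasure.ne_zero (gaussianReal 0 1)) h₁.symm
  have hZ₂ : AEMeasurable Z₂ μ := by
    by_contra h
    rw [Measure.map_of_not_aemeasurable h] at h₂
    exact (IsProbabilityMeasure.ne_zero (gaussianReal 0 1)) h₂.symm
  set s : ℝ := Real.sqrt (1 - ρ ^ 2) with hs
  have hmap : Measure.map (fun ω => (Z₁ ω, Z₂ ω)) μ
      = (gaussianReal 0 1).prod (gaussianReal 0 1) := by
    rw [(ProbabilityTheory.indepFun_iff_map_prod_eq_prod_map_map hZ₁ hZ₂).1 hind, h₁, h₂]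
  have hstep : ∫ ω, Real.sign (X ω) * Real.sign (Y ω) ∂μ
      = ∫ p : ℝ × ℝ, Real.sign p.1 * Real.sign (ρ * p.1 + s * p.2)
          ∂((gaussianReal 0 1).prod (gaussianReal 0 1)) := by
    rw [← hmap, integral_map (hZ₁.prodMk hZ₂)
      (sign_integrand_meas ρ s).aestronglyMeasurable]
    simp only [hX, hY]
  rw [hstep]
  by_cases hρ1 : ρ = 1
  · subst hρ1
    have hs0 : s = 0 := by rw [hs]; norm_num
    have hae : ∀ᵐ p : ℝ × ℝ ∂((gaussianReal 0 1).prod (gaussianReal 0 1)),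
        Real.sign p.1 * Real.sign (1 * p.1 + s * p.2) = 1 := by
      have hne : ∀ᵐ p : ℝ × ℝ ∂((gaussianReal 0 1).prod (gaussianReal 0 1)), p.1 ≠ 0 := by
        rw [ae_iff]
        convert prod_fst_zero_null using 2
        ext p; simp
      filter_upwards [hne] with p hp
      rcases Real.sign_apply_eq_of_ne_zero p.1 hp with h | h <;> simp [hs0, h]
    rw [integral_congr_ae hae]
    simp only [integral_const, measure_univ, ENNReal.toReal_one, probReal_univ, smul_eq_mul, one_mul,
      Real.arcsin_one]
    field_simp
  by_cases hρm1 : ρ = -1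
  · subst hρm1
    have hs0 : s = 0 := by rw [hs]; norm_num
    have hae : ∀ᵐ p : ℝ × ℝ ∂((gaussianReal 0 1).prod (gaussianReal 0 1)),
        Real.sign p.1 * Real.sign ((-1) * p.1 + s * p.2) = -1 := by
      have hne : ∀ᵐ p : ℝ × ℝ ∂((gaussianReal 0 1).prod (gaussianReal 0 1)), p.1 ≠ 0 := by
        rw [ae_iff]
        convert prod_fst_zero_null using 2
        ext p; simp
      filter_upwards [hne] with p hp
      have heq : (-1) * p.1 + s * p.2 = -p.1 := by rw [hs0]; ring
      rw [heq, Real.sign_neg]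
      rcases Real.sign_apply_eq_of_ne_zero p.1 hp with h | h <;> simp [h]
    rw [integral_congr_ae hae]
    simp only [integral_const, measure_univ, ENNReal.toReal_one, probReal_univ, smul_eq_mul, one_mul,
      Real.arcsin_neg, Real.arcsin_one]
    field_simp
  · -- main case : -1 < ρ < 1
    have hm1 : -1 < ρ := lt_of_le_of_ne hρ.1 (Ne.symm hρm1)
    have h1 : ρ < 1 := lt_of_le_of_ne hρ.2 hρ1
    have hspos : 0 < s := by
      rw [hs]
      exact Real.sqrt_pos.2 (by nlinarith)
    have hint : Integrable (fun p : ℝ × ℝ => Real.sign p.1 * Real.sign (ρ * p.1 + s * p.2))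
        ((gaussianReal 0 1).prod (gaussianReal 0 1)) := by
      refine (integrable_const (1:ℝ)).mono'
        (sign_integrand_meas ρ s).aestronglyMeasurable ?_
      filter_upwards with p
      rw [Real.norm_eq_abs, abs_mul]
      exact mul_le_one₀ (abs_rsign_le _) (abs_nonneg _) (abs_rsign_le _)
    rw [integral_prod _ hint]
    have hinner : ∀ x : ℝ,
        ∫ y, Real.sign x * Real.sign (ρ * x + s * y) ∂(gaussianReal 0 1)
          = Real.sign x * (2 * Phi (ρ / s * x) - 1) := by
      intro x
      rw [integral_const_mul, sign_inner hspos (ρ * x)]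
      congr 2
      field_simp
    simp_rw [hinner]
    have houter : ∫ x, Real.sign x * (2 * Phi (ρ / s * x) - 1) ∂(gaussianReal 0 1)
        = Gf (ρ / s) := by
      rw [integral_gaussian_eq, Gf]
    rw [houter, Gf_eq, Real.arcsin_eq_arctan ⟨hm1, h1⟩]
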